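/- Under the setup of the previous statement (F convex with L-Lipschitz gradient, h ∈ (0, 1/L], y⁺ = proj_W(y − hG), d = (1/h)(y − y⁺), Δ = G − ∇F(y), x* ∈ W): ‖y⁺ − x*‖² ≤ ‖y − x*‖² − 2hΔᵀ(y⁺ − x*) − 2h(F(y⁺) − F(x*)). -/

import Mathlib

open RealInnerProductSpace

variable {n : ℕ}

lemma line_hasDerivAt (F : EuclideanSpace ℝ (Fin n) → ℝ)
    (F' : EuclideanSpace ℝ (Fin n) → EuclideanSpace ℝ (Fin n))
    (hgrad : ∀ x, HasGradientAt F (F' x) x)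
    (a v : EuclideanSpace ℝ (Fin n)) (t : ℝ) :
    HasDerivAt (fun s : ℝ => F (a + s • v)) ⟪F' (a + t • v), v⟫ t := by
  have h1 : HasDerivAt (fun s : ℝ => a + s • v) v t := by
    simpa using ((hasDerivAt_id t).smul_const v).const_add a
  have h2 := (hgrad (a + t • v)).hasFDerivAt
  have h3 := h2.comp_hasDerivAt t h1
  exact (by simpa using h3 : HasDerivAt (F ∘ fun s : ℝ => a + s • v) ⟪F' (a + t • v), v⟫ t)

lemma grad_convex_ineq (F : EuclideanSpace ℝ (Fin n) → ℝ)
    (F' : EuclideanSpace ℝ (Fin n) → EuclideanSpace ℝ (Fin n))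
    (hconv : ConvexOn ℝ Set.univ F)
    (hgrad : ∀ x, HasGradientAt F (F' x) x)
    (x z : EuclideanSpace ℝ (Fin n)) :
    F x + ⟪F' x, z - x⟫ ≤ F z := by
  have hg : ConvexOn ℝ Set.univ (fun t : ℝ => F (x + t • (z - x))) := by
    have := hconv.comp_affineMap (AffineMap.lineMap x z)
    have heq : (fun t : ℝ => F (x + t • (z - x))) = F ∘ (AffineMap.lineMap x z) := by
      funext t
      simp [AffineMap.lineMap_apply]
      congr 1
      module
    rw [heq]
    simpa using this
  have hd : HasDerivAt (fun t : ℝ => F (x + t • (z - x))) ⟪F' x, z - x⟫ 0 := by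
    have := line_hasDerivAt F F' hgrad x (z - x) 0
    simpa using this
  have := hg.le_slope_of_hasDerivAt (Set.mem_univ (0:ℝ)) (Set.mem_univ (1:ℝ))
    one_pos.gt hd
  rw [slope_def_field] at this
  rw [one_smul, zero_smul, add_zero, show x + (z - x) = z from by module] at this
  rw [show ((1:ℝ)-0) = 1 by norm_num, div_one] at this
  linarith [this]

lemma descent_lemma (F : EuclideanSpace ℝ (Fin n) → ℝ)
    (F' : EuclideanSpace ℝ (Fin n) → EuclideanSpace ℝ (Fin n))
    (hgrad : ∀ x, HasGradientAt F (F' x) x)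
    (L : ℝ) (hL : 0 < L)
    (hlip : ∀ x y, ‖F' x - F' y‖ ≤ L * ‖x - y‖)
    (a b : EuclideanSpace ℝ (Fin n)) :
    F b ≤ F a + ⟪F' a, b - a⟫ + L / 2 * ‖b - a‖ ^ 2 := by
  set v := b - a with hv
  set φ : ℝ → ℝ := fun t => F (a + t • v) - t * ⟪F' a, v⟫ - L * t ^ 2 / 2 * ‖v‖ ^ 2 with hφ
  have hφd : ∀ t : ℝ, HasDerivAt φ
      (⟪F' (a + t • v), v⟫ - ⟪F' a, v⟫ - L * t * ‖v‖ ^ 2) t := by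
    intro t
    have h1 := line_hasDerivAt F F' hgrad a v t
    have h2 : HasDerivAt (fun t : ℝ => t * ⟪F' a, v⟫) ⟪F' a, v⟫ t := by
      simpa using (hasDerivAt_id t).mul_const ⟪F' a, v⟫
    have h3 : HasDerivAt (fun t : ℝ => L * t ^ 2 / 2 * ‖v‖ ^ 2) (L * t * ‖v‖ ^ 2) t := by
      have := ((hasDerivAt_pow 2 t).const_mul L).div_const 2
      have := this.mul_const (‖v‖ ^ 2)
      refine this.congr_deriv ?_
      ring
    exact (h1.sub h2).sub h3
  have hanti : AntitoneOn φ (Set.Icc 0 1) := by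
    apply antitoneOn_of_deriv_nonpos (convex_Icc 0 1)
    · exact fun t _ => ((hφd t).continuousAt).continuousWithinAt
    · exact fun t _ => ((hφd t).differentiableAt).differentiableWithinAt
    · intro t ht
      rw [interior_Icc] at ht
      rw [(hφd t).deriv]
      have hb : ⟪F' (a + t • v) - F' a, v⟫ ≤ L * t * ‖v‖ ^ 2 := by
        calc ⟪F' (a + t • v) - F' a, v⟫ ≤ ‖F' (a + t • v) - F' a‖ * ‖v‖ :=
              real_inner_le_norm _ _
          _ ≤ (L * ‖(a + t • v) - a‖) * ‖v‖ := by
              have := hlip (a + t • v) a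
              exact mul_le_mul_of_nonneg_right this (norm_nonneg _)
          _ = L * t * ‖v‖ ^ 2 := by
              rw [add_sub_cancel_left, norm_smul]
              simp [abs_of_pos ht.1]
              ring
      rw [inner_sub_left] at hb
      linarith
  have hkey := hanti (Set.mem_Icc.2 ⟨le_refl 0, zero_le_one⟩)
    (Set.mem_Icc.2 ⟨zero_le_one, le_refl 1⟩) zero_le_one
  simp only [hφ] at hkey
  rw [show a + (1:ℝ) • v = b from by rw [hv]; module,
    show a + (0:ℝ) • v = a from by module] at hkey
  ring_nf at hkey ⊢
  linarith

lemma proj_inner_le {W : Set (EuclideanSpace ℝ (Fin n))} (hconvW : Convex ℝ W)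
    (P : EuclideanSpace ℝ (Fin n) → EuclideanSpace ℝ (Fin n))
    (hP : ∀ z, P z ∈ W ∧ ∀ w ∈ W, ‖P z - z‖ ≤ ‖w - z‖)
    (z : EuclideanSpace ℝ (Fin n)) {w : EuclideanSpace ℝ (Fin n)} (hw : w ∈ W) :
    ⟪z - P z, w - P z⟫ ≤ 0 := by
  haveI : Nonempty W := ⟨⟨P z, (hP z).1⟩⟩
  have hinf : ‖z - P z‖ = ⨅ w : W, ‖z - w‖ := by
    apply le_antisymm
    · apply le_ciInf
      rintro ⟨u, hu⟩
      rw [norm_sub_rev]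
      calc ‖P z - z‖ ≤ ‖u - z‖ := (hP z).2 u hu
        _ = ‖z - u‖ := norm_sub_rev _ _
    · have hbdd : BddBelow (Set.range fun w : W => ‖z - (w : EuclideanSpace ℝ (Fin n))‖) :=
        ⟨0, by rintro x ⟨u, rfl⟩; exact norm_nonneg _⟩
      exact ciInf_le hbdd ⟨P z, (hP z).1⟩
  exact (norm_eq_iInf_iff_real_inner_le_zero hconvW (hP z).1).1 hinf w hw


theorem stmt_14 {d : ℕ} (F : EuclideanSpace ℝ (Fin d) → ℝ)
    (F' : EuclideanSpace ℝ (Fin d) → EuclideanSpace ℝ (Fin d))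
    (hconv : ConvexOn ℝ Set.univ F)
    (hgrad : ∀ x, HasGradientAt F (F' x) x)
    (L : ℝ) (hL : 0 < L)
    (hlip : ∀ x y, ‖F' x - F' y‖ ≤ L * ‖x - y‖)
    (W : Set (EuclideanSpace ℝ (Fin d)))
    (hne : W.Nonempty) (hcl : IsClosed W) (hconvW : Convex ℝ W)
    (P : EuclideanSpace ℝ (Fin d) → EuclideanSpace ℝ (Fin d))
    (hP : ∀ z, P z ∈ W ∧ ∀ w ∈ W, ‖P z - z‖ ≤ ‖w - z‖)
    (xstar y : EuclideanSpace ℝ (Fin d)) (hxstar : xstar ∈ W) (hy : y ∈ W)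
    (G : EuclideanSpace ℝ (Fin d))
    (h : ℝ) (hh0 : 0 < h) (hhL : h ≤ 1 / L)
    (yplus dvec Δ : EuclideanSpace ℝ (Fin d))
    (hyplus : yplus = P (y - h • G))
    (hdvec : dvec = (1 / h) • (y - yplus))
    (hΔ : Δ = G - F' y) :
    ‖yplus - xstar‖ ^ 2 ≤ ‖y - xstar‖ ^ 2 - 2 * h * ⟪Δ, yplus - xstar⟫
      - 2 * h * (F yplus - F xstar) := by
  have hLh : h * L ≤ 1 := by
    rw [le_div_iff₀ hL] at hhL
    exact hhL
  have expand : ‖y - xstar‖ ^ 2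
      = ‖y - yplus‖ ^ 2 + 2 * ⟪y - yplus, yplus - xstar⟫ + ‖yplus - xstar‖ ^ 2 := by
    rw [show y - xstar = (y - yplus) + (yplus - xstar) from by module, norm_add_sq_real]
  have hproj : ⟪y - h • G - yplus, xstar - yplus⟫ ≤ 0 := by
    rw [hyplus]
    exact proj_inner_le hconvW P hP _ hxstar
  have hproj' : h * ⟪G, yplus - xstar⟫ ≤ ⟪y - yplus, yplus - xstar⟫ := by
    have heq : ⟪y - h • G - yplus, xstar - yplus⟫
        = -⟪y - yplus, yplus - xstar⟫ + h * ⟪G, yplus - xstar⟫ := by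
      rw [show y - h • G - yplus = (y - yplus) - h • G from by module, inner_sub_left,
        real_inner_smul_left, show xstar - yplus = -(yplus - xstar) from by module,
        inner_neg_right, inner_neg_right]
      ring
    linarith [heq ▸ hproj]
  have hG : ⟪G, yplus - xstar⟫ = ⟪Δ, yplus - xstar⟫ + ⟪F' y, yplus - xstar⟫ := by
    rw [hΔ, inner_sub_left]
    ring
  have hcvx := grad_convex_ineq F F' hconv hgrad y xstar
  have hdesc := descent_lemma F F' hgrad L hL hlip y yplus
  have hinadd : ⟪F' y, yplus - y⟫ - ⟪F' y, xstar - y⟫ = ⟪F' y, yplus - xstar⟫ := by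
    rw [← inner_sub_right]
    congr 1
    module
  have hnorm : ‖yplus - y‖ = ‖y - yplus‖ := norm_sub_rev _ _
  have hq2 : (0:ℝ) ≤ ‖y - yplus‖ ^ 2 := sq_nonneg _
  rw [hnorm] at hdesc
  have hcomb : F yplus - F xstar ≤ ⟪F' y, yplus - xstar⟫ + L / 2 * ‖y - yplus‖ ^ 2 := by
    linarith
  have hcomb2 : 2 * h * (F yplus - F xstar)
      ≤ 2 * h * ⟪F' y, yplus - xstar⟫ + h * L * ‖y - yplus‖ ^ 2 := by
    nlinarith [mul_le_mul_of_nonneg_left hcomb (by linarith : (0:ℝ) ≤ 2 * h)]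
  have hLq : h * L * ‖y - yplus‖ ^ 2 ≤ ‖y - yplus‖ ^ 2 := by
    nlinarith
  rw [hG] at hproj'
  have hmul := mul_add h (⟪Δ, yplus - xstar⟫ : ℝ) ⟪F' y, yplus - xstar⟫
  linarith
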